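/- Let F be a field and let L = M₂(F) be the Lie algebra of all 2×2 matrices over F with bracket ⁅A, B⁆ = AB − BA. Then the commuting graph Γ(L) is disconnected. -/

import Mathlib

/-- The commuting graph of a Lie algebra `L` over `F`: vertices are the elements of
`L` outside the center, and two distinct vertices are adjacent iff they commute. -/
def commutingGraph (F : Type*) [CommRing F] (L : Type*) [LieRing L] [LieAlgebra F L] :
    SimpleGraph {x : L // x ∉ LieAlgebra.center F L} where
  Adj x y := x ≠ y ∧ ⁅(x : L), (y : L)⁆ = 0
  symm := ⟨fun x y h => ⟨h.1.symm, by rw [← lie_skew, h.2, neg_zero]⟩⟩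
  loopless := ⟨fun x h => h.1 rfl⟩

attribute [local instance 100] LieRing.ofAssociativeRing

section aux
variable {F : Type*} [Field F]

local notation "M" => Matrix (Fin 2) (Fin 2) F

lemma scalar_mem_center (b : M) (h1 : b 0 1 = 0) (h2 : b 1 0 = 0) (h3 : b 0 0 = b 1 1) :
    b ∈ LieAlgebra.center F M := by
  rw [LieAlgebra.center, LieModule.mem_maxTrivSubmodule]
  intro x
  have hb : b = b 0 0 • (1 : M) := by
    ext i j; fin_cases i <;> fin_cases j <;>
      simp [Matrix.one_apply, h1, h2, h3.symm]
  rw [hb, Ring.lie_def]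
  simp [Matrix.mul_smul, Matrix.smul_mul]

lemma span_of_commute (a b : M) (hb : ¬(b 0 1 = 0 ∧ b 1 0 = 0 ∧ b 0 0 = b 1 1))
    (h : a * b = b * a) : ∃ α β : F, a = α • (1 : M) + β • b := by
  have e : ∀ i j, (a * b) i j = (b * a) i j := fun i j => by rw [h]
  simp only [Matrix.mul_apply, Fin.sum_univ_two] at e
  have e00 := e 0 0
  have e01 := e 0 1
  have e10 := e 1 0
  by_cases hb2 : b 0 1 = 0
  · by_cases hb3 : b 1 0 = 0
    · have hd : b 0 0 ≠ b 1 1 := fun hdd => hb ⟨hb2, hb3, hdd⟩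
      have hd' : b 0 0 - b 1 1 ≠ 0 := sub_ne_zero.2 hd
      refine ⟨a 0 0 - (a 0 0 - a 1 1) / (b 0 0 - b 1 1) * b 0 0,
        (a 0 0 - a 1 1) / (b 0 0 - b 1 1), ?_⟩
      ext i j; fin_cases i <;> fin_cases j <;>
        simp only [Matrix.add_apply, Matrix.smul_apply, Matrix.one_apply, smul_eq_mul,
          Fin.zero_eta, Fin.mk_one, Fin.isValue, if_true, if_false, Fin.reduceEq] <;>
        field_simp <;>
        first
          | ring1
          | linear_combination e00 | linear_combination -e00
          | linear_combination e01 | linear_combination -e01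
          | linear_combination e10 | linear_combination -e10
    · refine ⟨a 0 0 - a 1 0 / b 1 0 * b 0 0, a 1 0 / b 1 0, ?_⟩
      ext i j; fin_cases i <;> fin_cases j <;>
        simp only [Matrix.add_apply, Matrix.smul_apply, Matrix.one_apply, smul_eq_mul,
          Fin.zero_eta, Fin.mk_one, Fin.isValue, if_true, if_false, Fin.reduceEq] <;>
        field_simp <;>
        first
          | ring1
          | linear_combination e00 | linear_combination -e00
          | linear_combination e01 | linear_combination -e01
          | linear_combination e10 | linear_combination -e10
  · refine ⟨a 0 0 - a 0 1 / b 0 1 * b 0 0, a 0 1 / b 0 1, ?_⟩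
    ext i j; fin_cases i <;> fin_cases j <;>
      simp only [Matrix.add_apply, Matrix.smul_apply, Matrix.one_apply, smul_eq_mul,
          Fin.zero_eta, Fin.mk_one, Fin.isValue, if_true, if_false, Fin.reduceEq] <;>
      field_simp <;>
      first
        | ring1
        | linear_combination e00 | linear_combination -e00
        | linear_combination e01 | linear_combination -e01
        | linear_combination e10 | linear_combination -e10

lemma lie_trans (a b c : M) (hb : b ∉ LieAlgebra.center F M)
    (hab : ⁅a, b⁆ = 0) (hbc : ⁅b, c⁆ = 0) : ⁅a, c⁆ = 0 := by
  have hbs : ¬(b 0 1 = 0 ∧ b 1 0 = 0 ∧ b 0 0 = b 1 1) := fun ⟨h1, h2, h3⟩ =>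
    hb (scalar_mem_center b h1 h2 h3)
  rw [Ring.lie_def, sub_eq_zero] at hab hbc
  obtain ⟨α, β, ha⟩ := span_of_commute a b hbs hab
  obtain ⟨γ, δ, hc⟩ := span_of_commute c b hbs hbc.symm
  rw [Ring.lie_def, ha, hc]
  simp only [add_mul, mul_add, smul_mul_assoc, mul_smul_comm, smul_smul, one_mul, mul_one]
  module

lemma walk_lie {v w : {x : M // x ∉ LieAlgebra.center F M}}
    (p : (commutingGraph F M).Walk v w) : ⁅(v : M), (w : M)⁆ = 0 := by
  induction p with
  | nil => exact lie_self _
  | @cons x y z h p ih => exact lie_trans x.1 y.1 z.1 y.2 h.2 ih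

end aux

/-- the commuting graph of the Lie algebra of 2×2 matrices over any field
(with bracket `⁅A, B⁆ = AB - BA`) is disconnected. -/
theorem stmt17 (F : Type*) [Field F] :
    ¬ (commutingGraph F (Matrix (Fin 2) (Fin 2) F)).Connected := by
  intro hconn
  set A : Matrix (Fin 2) (Fin 2) F := !![1, 0; 0, 0] with hA0
  set B : Matrix (Fin 2) (Fin 2) F := !![0, 1; 0, 0] with hB0
  have hAB : ⁅A, B⁆ ≠ 0 := by
    intro h
    have := congrFun (congrFun h 0) 1
    simp [Ring.lie_def, Matrix.mul_apply, Fin.sum_univ_two, A, B] at this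
  have hA : A ∉ LieAlgebra.center F (Matrix (Fin 2) (Fin 2) F) := by
    rw [LieAlgebra.center, LieModule.mem_maxTrivSubmodule]
    push_neg
    refine ⟨B, ?_⟩
    intro h
    have := congrFun (congrFun h 0) 1
    simp [Ring.lie_def, Matrix.mul_apply, Fin.sum_univ_two, A, B] at this
  have hBc : B ∉ LieAlgebra.center F (Matrix (Fin 2) (Fin 2) F) := by
    rw [LieAlgebra.center, LieModule.mem_maxTrivSubmodule]
    push_neg
    refine ⟨A, ?_⟩
    intro h
    have := congrFun (congrFun h 0) 1
    simp [Ring.lie_def, Matrix.mul_apply, Fin.sum_univ_two, A, B] at this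
  obtain ⟨p⟩ := hconn ⟨A, hA⟩ ⟨B, hBc⟩
  exact hAB (walk_lie p)
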